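/- For every real number k one has (k+1)^4 − 2k^4 + (k−1)^4 = 12k^2 + 2, and the double series ∑_{n=1}^∞ ∑_{i=0}^{2^{n−1}−1} (6(2i+1)^2 + 1)/2^{5n} converges with sum 1/2 − ∫_0^1 x^4 dx = 3/10. -/

import Mathlib

lemma sum_odd_sq (N : ℕ) :
    ∑ i ∈ Finset.range N, (6 * (2 * (i : ℝ) + 1) ^ 2 + 1) = 8 * (N:ℝ) ^ 3 - (N:ℝ) := by
  induction N with
  | zero => simp
  | succ n ih =>
    rw [Finset.sum_range_succ, ih]
    push_cast
    ring

lemma int_eval : (1:ℝ) / 2 - (∫ x in (0:ℝ)..1, x ^ 4) = 3 / 10 := by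
  simp [integral_pow]
  norm_num

theorem exhaustion_quartic :
    (∀ k : ℝ, (k + 1) ^ 4 - 2 * k ^ 4 + (k - 1) ^ 4 = 12 * k ^ 2 + 2) ∧
    HasSum (fun n : ℕ => ∑ i ∈ Finset.range (2 ^ n),
        (6 * (2 * (i : ℝ) + 1) ^ 2 + 1) / 2 ^ (5 * (n + 1)))
      (1 / 2 - ∫ x in (0:ℝ)..1, x ^ 4) ∧
    1 / 2 - (∫ x in (0:ℝ)..1, x ^ 4) = 3 / 10 := by
  refine ⟨fun k => by ring, ?_, int_eval⟩
  rw [int_eval]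
  have key : ∀ n : ℕ, (∑ i ∈ Finset.range (2 ^ n),
      (6 * (2 * (i : ℝ) + 1) ^ 2 + 1) / 2 ^ (5 * (n + 1)))
      = (1/4) * (1/4) ^ n - (1/32) * (1/16) ^ n := by
    intro n
    rw [← Finset.sum_div, sum_odd_sq]
    have h2 : ((2:ℝ) ^ n) ^ 3 = 8 ^ n := by
      rw [← pow_mul, show (8:ℝ) = 2 ^ 3 by norm_num, ← pow_mul, Nat.mul_comm]
    have h5 : (2:ℝ) ^ (5 * (n + 1)) = 32 * 32 ^ n := by
      rw [show (32:ℝ) = 2 ^ 5 by norm_num, ← pow_mul, Nat.mul_add, Nat.mul_one, pow_add]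
      ring
    push_cast
    rw [h2, h5, show ((1:ℝ)/4) = 8/32 by norm_num, show ((1:ℝ)/16) = 2/32 by norm_num,
      div_pow, div_pow]
    have h32 : (32:ℝ) ^ n ≠ 0 := by positivity
    field_simp
  rw [funext key]
  have g1 : HasSum (fun n : ℕ => (1/4 : ℝ) * (1/4) ^ n) (1/3) := by
    have := (hasSum_geometric_of_lt_one (by norm_num : (0:ℝ) ≤ 1/4)
      (by norm_num : (1/4:ℝ) < 1)).mul_left (1/4)
    rw [show (1/3:ℝ) = 1/4 * (1 - 1/4)⁻¹ by norm_num]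
    exact this
  have g2 : HasSum (fun n : ℕ => (1/32 : ℝ) * (1/16) ^ n) (1/30) := by
    have := (hasSum_geometric_of_lt_one (by norm_num : (0:ℝ) ≤ 1/16)
      (by norm_num : (1/16:ℝ) < 1)).mul_left (1/32)
    rw [show (1/30:ℝ) = 1/32 * (1 - 1/16)⁻¹ by norm_num]
    exact this
  have := g1.sub g2
  rw [show (3/10:ℝ) = 1/3 - 1/30 by norm_num]
  exact this
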